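/- arXiv:math/0509544 — 2 statements merged into one kernel-verified Lean document; each statement's English description precedes it below -/
import Mathlib

section
/- Let I ⊆ k[x_1,…,x_n] be an ideal, ≺ a term order, and v ∈ C_≺(I). Then for every u ∈ ℝ^n, in_u(I) = in_v(I) if and only if in_u(g) = in_v(g) for every g in the reduced Gröbner basis G_≺(I). -/
open MvPolynomial

/-- A term order on the monomials of `k[x_1,…,x_n]`, identified with exponent
vectors in `ℕ^n`: a strict total order with `1` smallest and compatible with
multiplication of monomials. -/
structure TermOrder (n : ℕ) : Type where
  lt : (Fin n →₀ ℕ) → (Fin n →₀ ℕ) → Prop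
  irrefl : ∀ a, ¬ lt a a
  trans : ∀ a b c, lt a b → lt b c → lt a c
  total : ∀ a b, a ≠ b → lt a b ∨ lt b a
  zero_lt : ∀ a, a ≠ 0 → lt 0 a
  add_right : ∀ a b c, lt a b → lt (a + c) (b + c)

variable {n : ℕ} {k : Type*} [Field k]

/-- The exponent of the `τ`-largest term of `f` (and `0` if `f = 0`). -/
noncomputable def TermOrder.leadExp (τ : TermOrder n) (f : MvPolynomial (Fin n) k) :
    Fin n →₀ ℕ :=
  letI := Classical.propDecidable (∃ α, α ∈ f.support ∧ ∀ β ∈ f.support, β ≠ α → τ.lt β α)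
  if h : ∃ α, α ∈ f.support ∧ ∀ β ∈ f.support, β ≠ α → τ.lt β α then h.choose else 0

/-- The initial term `in_τ(f)` : the `τ`-largest term of `f` (with coefficient). -/
noncomputable def TermOrder.initialTerm (τ : TermOrder n) (f : MvPolynomial (Fin n) k) :
    MvPolynomial (Fin n) k :=
  monomial (τ.leadExp f) (f.coeff (τ.leadExp f))

/-- The initial ideal `in_τ(I) = ⟨in_τ(f) : f ∈ I \ {0}⟩`. -/
noncomputable def TermOrder.initialIdeal (τ : TermOrder n) (I : Ideal (MvPolynomial (Fin n) k)) :
    Ideal (MvPolynomial (Fin n) k) :=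
  Ideal.span {p | ∃ f ∈ I, f ≠ 0 ∧ p = τ.initialTerm f}

/-- The `ω`-degree `⟨ω,α⟩` of a monomial exponent `α`. -/
noncomputable def wdeg (ω : Fin n → ℝ) (α : Fin n →₀ ℕ) : ℝ := ∑ i, ω i * (α i : ℝ)

/-- The initial form `in_ω(f)`: the sum of the terms of `f` whose exponents
maximize `⟨ω,·⟩`. -/
noncomputable def initialForm (ω : Fin n → ℝ) (f : MvPolynomial (Fin n) k) :
    MvPolynomial (Fin n) k :=
  letI : DecidablePred fun α : Fin n →₀ ℕ => ∀ β ∈ f.support, wdeg ω β ≤ wdeg ω α :=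
    Classical.decPred _
  ∑ α ∈ f.support.filter (fun α => ∀ β ∈ f.support, wdeg ω β ≤ wdeg ω α),
    monomial α (f.coeff α)

/-- The initial ideal `in_ω(I) = ⟨in_ω(f) : f ∈ I⟩`. -/
noncomputable def initialFormIdeal (ω : Fin n → ℝ) (I : Ideal (MvPolynomial (Fin n) k)) :
    Ideal (MvPolynomial (Fin n) k) :=
  Ideal.span {p | ∃ f ∈ I, p = initialForm ω f}

/-- `C_≺(I)`: the closure of `{u : in_u(I) = in_≺(I)}` in `ℝ^n`. -/
noncomputable def Cprec (τ : TermOrder n) (I : Ideal (MvPolynomial (Fin n) k)) :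
    Set (Fin n → ℝ) :=
  closure {u : Fin n → ℝ | initialFormIdeal u I = τ.initialIdeal I}

/-- `C_v(I)`: the closure of the equivalence class `{u : in_u(I) = in_v(I)}`. -/
noncomputable def Cv (I : Ideal (MvPolynomial (Fin n) k)) (v : Fin n → ℝ) :
    Set (Fin n → ℝ) :=
  closure {u : Fin n → ℝ | initialFormIdeal u I = initialFormIdeal v I}

/-- `F` is a face of `C`: either empty or the set of maximizers over `C` of a
linear functional. -/
def IsFaceOf (C F : Set (Fin n → ℝ)) : Prop :=
  F = ∅ ∨ ∃ w : Fin n → ℝ, F = {x ∈ C | ∀ y ∈ C, ∑ i, w i * y i ≤ ∑ i, w i * x i}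

/-- The Gröbner fan of `I`: all nonempty faces of the cones `C_v(I)`, `v ∈ ℝ^n_{>0}`. -/
noncomputable def GroebnerFan (I : Ideal (MvPolynomial (Fin n) k)) :
    Set (Set (Fin n → ℝ)) :=
  {F | F.Nonempty ∧ ∃ v : Fin n → ℝ, (∀ i, 0 < v i) ∧ IsFaceOf (Cv I v) F}

/-- `G` is a (finite) Gröbner basis of `I` w.r.t. `τ`. -/
def IsGroebnerBasis (τ : TermOrder n) (I : Ideal (MvPolynomial (Fin n) k))
    (G : Set (MvPolynomial (Fin n) k)) : Prop :=
  G.Finite ∧ Ideal.span G = I ∧ τ.initialIdeal I = Ideal.span (τ.initialTerm '' G)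

/-- `G` is the reduced Gröbner basis of `I` w.r.t. `τ`. -/
def IsReducedGroebnerBasis (τ : TermOrder n) (I : Ideal (MvPolynomial (Fin n) k))
    (G : Set (MvPolynomial (Fin n) k)) : Prop :=
  IsGroebnerBasis τ I G ∧
  (∀ g ∈ G, g.coeff (τ.leadExp g) = 1) ∧
  (∀ g ∈ G, ∀ α ∈ g.support, α ≠ τ.leadExp g →
    (monomial α 1 : MvPolynomial (Fin n) k) ∉ τ.initialIdeal I) ∧
  (∀ g ∈ G, Ideal.span (τ.initialTerm '' (G \ {g})) ≠ τ.initialIdeal I)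



/- ### ======= auxiliary development ======= -/

/- ### auxiliary: basic order facts -/

namespace TermOrder

variable (τ : TermOrder n)

lemma aux_asymm {a b} (h : τ.lt a b) : ¬ τ.lt b a := fun h' => τ.irrefl a (τ.trans _ _ _ h h')

lemma aux_lt_of_le {a b : Fin n →₀ ℕ} (h : a ≤ b) (hne : a ≠ b) : τ.lt a b := by
  obtain ⟨c, rfl⟩ := le_iff_exists_add.mp h
  rcases eq_or_ne c 0 with rfl | hc
  · simp at hne
  · have := τ.add_right 0 c a (τ.zero_lt c hc)
    simpa [add_comm] using this

lemma aux_wf : WellFounded τ.lt := by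
  haveI : IsIrrefl (Fin n →₀ ℕ) τ.lt := ⟨τ.irrefl⟩
  haveI : IsTrans (Fin n →₀ ℕ) τ.lt := ⟨τ.trans⟩
  haveI : IsStrictOrder (Fin n →₀ ℕ) τ.lt := { }
  rw [RelEmbedding.wellFounded_iff_isEmpty]
  by_contra h
  rw [not_isEmpty_iff] at h
  obtain ⟨f⟩ := h
  obtain ⟨i, j, hij, hle⟩ := wellQuasiOrdered_le (α := Fin n →₀ ℕ)
    (fun m => f m)
  have hlt : τ.lt (f j) (f i) := f.map_rel_iff.mpr hij
  rcases eq_or_ne (f i) (f j) with he | hne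
  · exact τ.irrefl (f j) (he ▸ hlt)
  · exact τ.aux_asymm (τ.aux_lt_of_le hle hne) hlt

end TermOrder

/-- strict maximum of a finite set w.r.t. a transitive, total relation -/
lemma Finset.exists_strict_max' {α : Type*} (r : α → α → Prop)
    (htr : ∀ a b c, r a b → r b c → r a c)
    (htot : ∀ a b, a ≠ b → r a b ∨ r b a)
    (s : Finset α) (hs : s.Nonempty) : ∃ a ∈ s, ∀ b ∈ s, b ≠ a → r b a := by
  classical
  induction s using Finset.cons_induction with
  | empty => exact absurd hs (by simp)
  | cons a s ha ih =>
    rcases s.eq_empty_or_nonempty with rfl | hs'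
    · exact ⟨a, by simp, by simp⟩
    · obtain ⟨m, hm, hmax⟩ := ih hs'
      have ham : a ≠ m := fun h => ha (h ▸ hm)
      rcases htot a m ham with h | h
      · refine ⟨m, Finset.mem_cons_of_mem hm, ?_⟩
        intro b hb hbm
        rcases Finset.mem_cons.mp hb with rfl | hb'
        · exact h
        · exact hmax b hb' hbm
      · refine ⟨a, Finset.mem_cons_self a s, ?_⟩
        intro b hb hba
        rcases Finset.mem_cons.mp hb with rfl | hb'
        · exact absurd rfl hba
        · rcases eq_or_ne b m with rfl | hbm
          · exact h
          · exact htr b m a (hmax b hb' hbm) h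

namespace TermOrder

variable (τ : TermOrder n)

lemma aux_leadExp_spec {f : MvPolynomial (Fin n) k} (hf : f ≠ 0) :
    τ.leadExp f ∈ f.support ∧ ∀ β ∈ f.support, β ≠ τ.leadExp f → τ.lt β (τ.leadExp f) := by
  have hex : ∃ α, α ∈ f.support ∧ ∀ β ∈ f.support, β ≠ α → τ.lt β α := by
    obtain ⟨a, ha, hmax⟩ := Finset.exists_strict_max' τ.lt τ.trans τ.total f.support
      (MvPolynomial.support_nonempty.mpr hf)
    exact ⟨a, ha, hmax⟩
  rw [TermOrder.leadExp, dif_pos hex]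
  exact hex.choose_spec

lemma aux_leadExp_mem {f : MvPolynomial (Fin n) k} (hf : f ≠ 0) :
    τ.leadExp f ∈ f.support := (τ.aux_leadExp_spec hf).1

lemma aux_leadExp_max {f : MvPolynomial (Fin n) k} (hf : f ≠ 0) :
    ∀ β ∈ f.support, β ≠ τ.leadExp f → τ.lt β (τ.leadExp f) := (τ.aux_leadExp_spec hf).2

lemma aux_leadExp_eq {f : MvPolynomial (Fin n) k} {α : Fin n →₀ ℕ}
    (h1 : α ∈ f.support) (h2 : ∀ β ∈ f.support, β ≠ α → τ.lt β α) : τ.leadExp f = α := by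
  have hf : f ≠ 0 := fun h => by simp [h] at h1
  by_contra hne
  have h3 := h2 _ (τ.aux_leadExp_mem hf) hne
  have h4 := τ.aux_leadExp_max hf _ h1 (Ne.symm hne)
  exact τ.aux_asymm h3 h4

end TermOrder

/- ### wdeg basics -/

lemma aux_wdeg_add (w : Fin n → ℝ) (α β : Fin n →₀ ℕ) :
    wdeg w (α + β) = wdeg w α + wdeg w β := by
  simp only [wdeg, Finsupp.add_apply, Nat.cast_add, mul_add]
  exact Finset.sum_add_distrib

lemma aux_wdeg_continuous (α : Fin n →₀ ℕ) : Continuous fun w : Fin n → ℝ => wdeg w α := by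
  unfold wdeg
  exact continuous_finset_sum _ fun i _ => (continuous_apply i).mul continuous_const

/- ### coefficients of initialForm -/

lemma aux_coeff_initialForm (w : Fin n → ℝ) (f : MvPolynomial (Fin n) k) (β : Fin n →₀ ℕ) :
    coeff β (initialForm w f) =
      if β ∈ f.support ∧ ∀ γ ∈ f.support, wdeg w γ ≤ wdeg w β then coeff β f else 0 := by
  classical
  rw [initialForm]
  rw [MvPolynomial.coeff_sum]
  simp only [MvPolynomial.coeff_monomial]
  rw [Finset.sum_ite_eq' _ β (fun γ => coeff γ f)]
  simp only [Finset.mem_filter]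

lemma aux_support_initialForm_subset (w : Fin n → ℝ) (f : MvPolynomial (Fin n) k) :
    (initialForm w f).support ⊆ f.support := by
  intro β hβ
  rw [MvPolynomial.mem_support_iff, aux_coeff_initialForm] at hβ
  split_ifs at hβ with h
  · exact h.1
  · exact absurd rfl hβ

lemma aux_mem_support_initialForm {w : Fin n → ℝ} {f : MvPolynomial (Fin n) k}
    {β : Fin n →₀ ℕ} :
    β ∈ (initialForm w f).support ↔
      β ∈ f.support ∧ ∀ γ ∈ f.support, wdeg w γ ≤ wdeg w β := by
  rw [MvPolynomial.mem_support_iff, aux_coeff_initialForm]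
  constructor
  · intro h
    split_ifs at h with hc
    · exact hc
    · exact absurd rfl h
  · intro h
    rw [if_pos h]
    exact MvPolynomial.mem_support_iff.mp h.1

lemma aux_coeff_initialForm_of_mem {w : Fin n → ℝ} {f : MvPolynomial (Fin n) k}
    {β : Fin n →₀ ℕ} (h : β ∈ (initialForm w f).support) :
    coeff β (initialForm w f) = coeff β f := by
  rw [aux_coeff_initialForm, if_pos (aux_mem_support_initialForm.mp h)]

lemma aux_initialForm_zero (w : Fin n → ℝ) : initialForm w (0 : MvPolynomial (Fin n) k) = 0 := by
  rw [initialForm]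
  simp

lemma aux_initialForm_ne_zero {w : Fin n → ℝ} {f : MvPolynomial (Fin n) k} (hf : f ≠ 0) :
    initialForm w f ≠ 0 := by
  obtain ⟨β, hβ, hmax⟩ := Finset.exists_max_image f.support (fun α => wdeg w α)
    (MvPolynomial.support_nonempty.mpr hf)
  intro h
  have : β ∈ (initialForm w f).support := aux_mem_support_initialForm.mpr ⟨hβ, hmax⟩
  rw [h] at this
  simp at this

/- ### w-graded components -/

noncomputable def vcomp (w : Fin n → ℝ) (d : ℝ) (f : MvPolynomial (Fin n) k) :
    MvPolynomial (Fin n) k :=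
  letI : DecidablePred fun α : Fin n →₀ ℕ => wdeg w α = d := Classical.decPred _
  ∑ α ∈ f.support.filter (fun α => wdeg w α = d), monomial α (coeff α f)

lemma aux_coeff_vcomp (w : Fin n → ℝ) (d : ℝ) (f : MvPolynomial (Fin n) k) (β : Fin n →₀ ℕ) :
    coeff β (vcomp w d f) = if wdeg w β = d then coeff β f else 0 := by
  classical
  rw [vcomp, MvPolynomial.coeff_sum]
  simp only [MvPolynomial.coeff_monomial]
  rw [Finset.sum_ite_eq' _ β (fun γ => coeff γ f)]
  simp only [Finset.mem_filter]
  rcases eq_or_ne (coeff β f) 0 with h0 | h0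
  · split_ifs <;> simp [h0]
  · have hs : β ∈ f.support := MvPolynomial.mem_support_iff.mpr h0
    split_ifs with h1 h2 h2 <;> first
      | rfl
      | (exact absurd ⟨hs, h2⟩ h1)
      | (exact absurd h1.2 h2)

lemma aux_vcomp_add (w : Fin n → ℝ) (d : ℝ) (f g : MvPolynomial (Fin n) k) :
    vcomp w d (f + g) = vcomp w d f + vcomp w d g := by
  apply MvPolynomial.ext
  intro β
  simp only [MvPolynomial.coeff_add, aux_coeff_vcomp]
  split_ifs <;> simp

lemma aux_vcomp_zero (w : Fin n → ℝ) (d : ℝ) : vcomp w d (0 : MvPolynomial (Fin n) k) = 0 := by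
  apply MvPolynomial.ext
  intro β
  simp [aux_coeff_vcomp]

lemma aux_vcomp_sum {ι : Type*} (w : Fin n → ℝ) (d : ℝ) (s : Finset ι)
    (f : ι → MvPolynomial (Fin n) k) :
    vcomp w d (∑ i ∈ s, f i) = ∑ i ∈ s, vcomp w d (f i) := by
  classical
  induction s using Finset.induction with
  | empty => simp [aux_vcomp_zero]
  | insert _ _ hx ih => rename_i a s
                        rw [Finset.sum_insert hx, Finset.sum_insert hx, aux_vcomp_add, ih]

lemma aux_vcomp_monomial_mul (w : Fin n → ℝ) (d : ℝ) (δ : Fin n →₀ ℕ) (c : k)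
    (f : MvPolynomial (Fin n) k) :
    vcomp w d (monomial δ c * f) = monomial δ c * vcomp w (d - wdeg w δ) f := by
  apply MvPolynomial.ext
  intro β
  rw [aux_coeff_vcomp, MvPolynomial.coeff_monomial_mul', MvPolynomial.coeff_monomial_mul',
    aux_coeff_vcomp]
  by_cases hle : δ ≤ β
  · rw [if_pos hle, if_pos hle]
    have hβ : wdeg w β = wdeg w δ + wdeg w (β - δ) := by
      conv_lhs => rw [← add_tsub_cancel_of_le hle]
      rw [aux_wdeg_add]
    by_cases h : wdeg w (β - δ) = d - wdeg w δ
    · rw [if_pos h, if_pos (by rw [hβ, h]; ring)]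
    · rw [if_neg h, if_neg (by rw [hβ]; intro hc; apply h; linarith), mul_zero]
  · rw [if_neg hle, if_neg hle]
    split_ifs <;> rfl

/- ### more vcomp facts -/

lemma aux_support_vcomp_subset (w : Fin n → ℝ) (d : ℝ) (f : MvPolynomial (Fin n) k) :
    (vcomp w d f).support ⊆ f.support := by
  intro β hβ
  rw [MvPolynomial.mem_support_iff, aux_coeff_vcomp] at hβ
  split_ifs at hβ with h
  · exact MvPolynomial.mem_support_iff.mpr hβ
  · exact absurd rfl hβ

lemma aux_coeff_vcomp_of_deg {w : Fin n → ℝ} {d : ℝ} {f : MvPolynomial (Fin n) k}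
    {β : Fin n →₀ ℕ} (h : wdeg w β = d) : coeff β (vcomp w d f) = coeff β f := by
  rw [aux_coeff_vcomp, if_pos h]

lemma aux_vcomp_of_homog (w : Fin n → ℝ) (d e : ℝ) (f : MvPolynomial (Fin n) k)
    (h : ∀ β ∈ f.support, wdeg w β = e) :
    vcomp w d f = if d = e then f else 0 := by
  apply MvPolynomial.ext
  intro β
  rw [aux_coeff_vcomp]
  rcases eq_or_ne (coeff β f) 0 with h0 | h0
  · split_ifs <;> simp [h0]
  · have hβ : wdeg w β = e := h β (MvPolynomial.mem_support_iff.mpr h0)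
    by_cases hd : d = e
    · rw [if_pos (hβ.trans hd.symm), if_pos hd]
    · rw [if_neg (by rw [hβ]; exact fun hc => hd hc.symm), if_neg hd]
      simp

lemma aux_vcomp_eq_zero_of_lt {w : Fin n → ℝ} {d : ℝ} {f : MvPolynomial (Fin n) k}
    (h : ∀ β ∈ f.support, wdeg w β < d) : vcomp w d f = 0 := by
  apply MvPolynomial.ext
  intro β
  rw [aux_coeff_vcomp]
  rcases eq_or_ne (coeff β f) 0 with h0 | h0
  · split_ifs <;> simp [h0]
  · rw [if_neg (ne_of_lt (h β (MvPolynomial.mem_support_iff.mpr h0)))]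
    simp

lemma aux_initialForm_eq_vcomp {w : Fin n → ℝ} {f : MvPolynomial (Fin n) k}
    {μ : Fin n →₀ ℕ} (hμ : μ ∈ f.support) (hmax : ∀ γ ∈ f.support, wdeg w γ ≤ wdeg w μ) :
    initialForm w f = vcomp w (wdeg w μ) f := by
  apply MvPolynomial.ext
  intro β
  rw [aux_coeff_initialForm, aux_coeff_vcomp]
  by_cases hβ : β ∈ f.support
  · by_cases he : wdeg w β = wdeg w μ
    · rw [if_pos ⟨hβ, fun γ hγ => (hmax γ hγ).trans he.ge⟩, if_pos he]
    · rw [if_neg ?_, if_neg he]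
      rintro ⟨-, hm⟩
      exact he (le_antisymm (hmax β hβ) (hm μ hμ))
  · have h0 : coeff β f = 0 := MvPolynomial.notMem_support_iff.mp hβ
    rw [h0]
    split_ifs <;> first | rfl | (exact absurd ‹_ ∧ _›.1 hβ)

/- ### monomial ideal lemmas -/

lemma aux_mem_span_initialTerms {τ : TermOrder n} {G : Set (MvPolynomial (Fin n) k)}
    (hmonic : ∀ g ∈ G, MvPolynomial.coeff (τ.leadExp g) g = 1)
    {p : MvPolynomial (Fin n) k} (hp : p ∈ Ideal.span (τ.initialTerm '' G)) :
    ∀ α ∈ p.support, ∃ g ∈ G, τ.leadExp g ≤ α := by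
  classical
  refine Submodule.span_induction ?_ ?_ ?_ ?_ hp
  · rintro x ⟨g, hg, rfl⟩ α hα
    have : (τ.initialTerm g).support ⊆ {τ.leadExp g} := by
      rw [TermOrder.initialTerm]
      exact MvPolynomial.support_monomial_subset
    have hα' := this hα
    rw [Finset.mem_singleton] at hα'
    exact ⟨g, hg, hα'.ge⟩
  · intro α hα
    simp at hα
  · intro x y _ _ hx hy α hα
    rcases Finset.mem_union.mp (MvPolynomial.support_add hα) with h | h
    · exact hx α h
    · exact hy α h
  · intro a x _ hx α hα
    rw [smul_eq_mul] at hα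
    have := MvPolynomial.support_mul a x hα
    rw [Finset.mem_add] at this
    obtain ⟨β, hβ, γ, hγ, rfl⟩ := this
    obtain ⟨g, hg, hle⟩ := hx γ hγ
    exact ⟨g, hg, hle.trans (le_add_self)⟩

lemma aux_monomial_mem_span {τ : TermOrder n} {G : Set (MvPolynomial (Fin n) k)}
    (hmonic : ∀ g ∈ G, MvPolynomial.coeff (τ.leadExp g) g = 1)
    {g : MvPolynomial (Fin n) k} (hg : g ∈ G) {α : Fin n →₀ ℕ}
    (h : τ.leadExp g ≤ α) (c : k) :
    monomial α c ∈ Ideal.span (τ.initialTerm '' G) := by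
  have heq : monomial α c = monomial (α - τ.leadExp g) c * τ.initialTerm g := by
    rw [TermOrder.initialTerm, hmonic g hg, MvPolynomial.monomial_mul, mul_one,
      tsub_add_cancel_of_le h]
  rw [heq]
  exact Ideal.mul_mem_left _ _ (Ideal.subset_span ⟨g, hg, rfl⟩)

/- ### division representations -/

def auxRep (τ : TermOrder n) (G : Set (MvPolynomial (Fin n) k))
    (f : MvPolynomial (Fin n) k) : Prop :=
  ∃ (m : ℕ) (c : Fin m → k) (δ : Fin m → (Fin n →₀ ℕ)) (g : Fin m → MvPolynomial (Fin n) k),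
    (∀ i, g i ∈ G) ∧ (∀ i, c i ≠ 0) ∧
    (Function.Injective fun i => δ i + τ.leadExp (g i)) ∧
    (∀ i, δ i + τ.leadExp (g i) = τ.leadExp f ∨ τ.lt (δ i + τ.leadExp (g i)) (τ.leadExp f)) ∧
    f = ∑ i, monomial (δ i) (c i) * g i

lemma aux_exists_rep {τ : TermOrder n} {G : Set (MvPolynomial (Fin n) k)}
    {I : Ideal (MvPolynomial (Fin n) k)}
    (hGI : Ideal.span G = I)
    (hin : τ.initialIdeal I = Ideal.span (τ.initialTerm '' G))
    (hmonic : ∀ g ∈ G, MvPolynomial.coeff (τ.leadExp g) g = 1) :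
    ∀ f ∈ I, f ≠ 0 → auxRep τ G f := by
  classical
  have main : ∀ α : Fin n →₀ ℕ, ∀ f : MvPolynomial (Fin n) k,
      f ∈ I → f ≠ 0 → τ.leadExp f = α → auxRep τ G f := by
    refine fun α => τ.aux_wf.induction
      (C := fun α => ∀ f, f ∈ I → f ≠ 0 → τ.leadExp f = α → auxRep τ G f) α ?_
    intro x IH f hfI hf0 hlead
    have hcf : coeff (τ.leadExp f) f ≠ 0 :=
      MvPolynomial.mem_support_iff.mp (τ.aux_leadExp_mem hf0)
    have hft : τ.initialTerm f ∈ Ideal.span (τ.initialTerm '' G) :=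
      hin ▸ Ideal.subset_span ⟨f, hfI, hf0, rfl⟩
    have hsupp : τ.leadExp f ∈ (τ.initialTerm f).support := by
      rw [TermOrder.initialTerm, MvPolynomial.support_monomial, if_neg hcf]
      exact Finset.mem_singleton_self _
    obtain ⟨g₀, hg₀G, hg₀le⟩ := aux_mem_span_initialTerms hmonic hft _ hsupp
    have hg₀0 : g₀ ≠ 0 := by
      intro h
      have := hmonic g₀ hg₀G
      rw [h] at this
      simp at this
    set δ₀ := τ.leadExp f - τ.leadExp g₀ with hδ₀def
    have hδ₀ : δ₀ + τ.leadExp g₀ = τ.leadExp f := tsub_add_cancel_of_le hg₀le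
    set c₀ := coeff (τ.leadExp f) f with hc₀def
    set f' := f - monomial δ₀ c₀ * g₀ with hf'def
    have hf'I : f' ∈ I := I.sub_mem hfI (I.mul_mem_left _ (hGI ▸ Ideal.subset_span hg₀G))
    have hLfprod : coeff (τ.leadExp f) (monomial δ₀ c₀ * g₀) = c₀ := by
      rw [MvPolynomial.coeff_monomial_mul', if_pos (hδ₀ ▸ le_self_add),
        show τ.leadExp f - δ₀ = τ.leadExp g₀ by rw [← hδ₀, add_tsub_cancel_left],
        hmonic g₀ hg₀G, mul_one]
    have hsupf' : ∀ β ∈ f'.support, τ.lt β (τ.leadExp f) := by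
      intro β hβ
      have hβne : β ≠ τ.leadExp f := by
        rintro rfl
        rw [MvPolynomial.mem_support_iff, hf'def, MvPolynomial.coeff_sub, hLfprod,
          ← hc₀def, sub_self] at hβ
        exact hβ rfl
      have hun : β ∈ f.support ∪ (monomial δ₀ c₀ * g₀).support :=
        MvPolynomial.support_sub _ _ _ hβ
      rcases Finset.mem_union.mp hun with h | h
      · exact τ.aux_leadExp_max hf0 β h hβne
      · have h2 := MvPolynomial.support_mul _ _ h
        rw [Finset.mem_add] at h2
        obtain ⟨δ', hδ', γ, hγ, rfl⟩ := h2
        have hδ'' : δ' = δ₀ := by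
          have := MvPolynomial.support_monomial_subset hδ'
          rwa [Finset.mem_singleton] at this
        subst hδ''
        rcases eq_or_ne γ (τ.leadExp g₀) with rfl | hγne
        · exact absurd hδ₀ hβne
        · have := τ.add_right γ (τ.leadExp g₀) δ₀ (τ.aux_leadExp_max hg₀0 γ hγ hγne)
          rw [add_comm γ δ₀, add_comm (τ.leadExp g₀) δ₀, hδ₀] at this
          exact this
    by_cases hf'0 : f' = 0
    · refine ⟨1, fun _ => c₀, fun _ => δ₀, fun _ => g₀, fun _ => hg₀G, fun _ => hcf, ?_, ?_, ?_⟩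
      · intro i j _
        exact Subsingleton.elim i j
      · intro i
        exact Or.inl hδ₀
      · rw [Fin.sum_univ_one]
        have := eq_of_sub_eq_zero (hf'def ▸ hf'0 : f - monomial δ₀ c₀ * g₀ = 0)
        exact this
    · have hltf' : τ.lt (τ.leadExp f') (τ.leadExp f) := hsupf' _ (τ.aux_leadExp_mem hf'0)
      obtain ⟨m, c, δ, g, hgG, hc, hinj, hbound, hsum⟩ :=
        IH (τ.leadExp f') (hlead ▸ hltf') f' hf'I hf'0 rfl
      have hboundf : ∀ i, τ.lt (δ i + τ.leadExp (g i)) (τ.leadExp f) := by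
        intro i
        rcases hbound i with h | h
        · exact h ▸ hltf'
        · exact τ.trans _ _ _ h hltf'
      refine ⟨m + 1, Fin.cons c₀ c, Fin.cons δ₀ δ, Fin.cons g₀ g, ?_, ?_, ?_, ?_, ?_⟩
      · intro i
        refine Fin.cases ?_ ?_ i
        · simpa using hg₀G
        · intro j
          simpa using hgG j
      · intro i
        refine Fin.cases ?_ ?_ i
        · simpa using hcf
        · intro j
          simpa using hc j
      · intro i j
        refine Fin.cases ?_ ?_ i
        · refine Fin.cases ?_ ?_ j
          · intro _
            rfl
          · intro j' h
            simp only [Fin.cons_zero, Fin.cons_succ] at h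
            rw [hδ₀] at h
            exact absurd (h ▸ hboundf j') (τ.irrefl _)
        · intro i'
          refine Fin.cases ?_ ?_ j
          · intro h
            simp only [Fin.cons_zero, Fin.cons_succ] at h
            rw [hδ₀] at h
            exact absurd (h ▸ hboundf i') (τ.irrefl _)
          · intro j' h
            simp only [Fin.cons_succ] at h
            exact congrArg Fin.succ (hinj h)
      · intro i
        refine Fin.cases ?_ ?_ i
        · simpa using Or.inl hδ₀
        · intro j
          simp only [Fin.cons_succ]
          exact Or.inr (hboundf j)
      · rw [Fin.sum_univ_succ]
        simp only [Fin.cons_zero, Fin.cons_succ]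
        rw [← hsum, hf'def]
        ring
  intro f hf hf0
  exact main (τ.leadExp f) f hf hf0 rfl

/- ### the lexicographic (w, τ) comparison -/

def auxLtw (τ : TermOrder n) (w : Fin n → ℝ) (a b : Fin n →₀ ℕ) : Prop :=
  wdeg w a < wdeg w b ∨ (wdeg w a = wdeg w b ∧ τ.lt a b)

lemma auxLtw_trans (τ : TermOrder n) (w : Fin n → ℝ) :
    ∀ a b c, auxLtw τ w a b → auxLtw τ w b c → auxLtw τ w a c := by
  rintro a b c (h1 | ⟨h1, h1'⟩) (h2 | ⟨h2, h2'⟩)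
  · exact Or.inl (h1.trans h2)
  · exact Or.inl (h2 ▸ h1)
  · exact Or.inl (h1 ▸ h2)
  · exact Or.inr ⟨h1.trans h2, τ.trans _ _ _ h1' h2'⟩

lemma auxLtw_total (τ : TermOrder n) (w : Fin n → ℝ) :
    ∀ a b, a ≠ b → auxLtw τ w a b ∨ auxLtw τ w b a := by
  intro a b hab
  rcases lt_trichotomy (wdeg w a) (wdeg w b) with h | h | h
  · exact Or.inl (Or.inl h)
  · rcases τ.total a b hab with h' | h'
    · exact Or.inl (Or.inr ⟨h, h'⟩)
    · exact Or.inr (Or.inr ⟨h.symm, h'⟩)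
  · exact Or.inr (Or.inl h)

lemma auxLtw_irrefl (τ : TermOrder n) (w : Fin n → ℝ) (a : Fin n →₀ ℕ) : ¬ auxLtw τ w a a := by
  rintro (h | ⟨-, h⟩)
  · exact lt_irrefl _ h
  · exact τ.irrefl _ h

lemma auxLtw_wle {τ : TermOrder n} {w : Fin n → ℝ} {a b : Fin n →₀ ℕ}
    (h : auxLtw τ w a b) : wdeg w a ≤ wdeg w b := by
  rcases h with h | ⟨h, -⟩
  · exact h.le
  · exact h.le

/-- `w`-maximality of all leading exponents of `G` -/
def auxWM (τ : TermOrder n) (G : Set (MvPolynomial (Fin n) k)) (w : Fin n → ℝ) : Prop :=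
  ∀ g ∈ G, ∀ β ∈ g.support, wdeg w β ≤ wdeg w (τ.leadExp g)

/- ### the Grand Lemma -/

lemma aux_GL {τ : TermOrder n} {G : Set (MvPolynomial (Fin n) k)}
    {I : Ideal (MvPolynomial (Fin n) k)}
    (hGI : Ideal.span G = I)
    (hin : τ.initialIdeal I = Ideal.span (τ.initialTerm '' G))
    (hmonic : ∀ g ∈ G, MvPolynomial.coeff (τ.leadExp g) g = 1)
    {w : Fin n → ℝ} (hWM : auxWM τ G w)
    {f : MvPolynomial (Fin n) k} (hf : f ∈ I) (hf0 : f ≠ 0) :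
    initialForm w f ∈ Ideal.span ((initialForm w) '' G) ∧
    ∃ g ∈ G, τ.leadExp g ≤ τ.leadExp (initialForm w f) := by
  classical
  obtain ⟨m, c, δ, g, hgG, hc, hinj, -, hsum⟩ := aux_exists_rep hGI hin hmonic f hf hf0
  set μ : Fin m → (Fin n →₀ ℕ) := fun i => δ i + τ.leadExp (g i) with hμdef
  have hg0 : ∀ i, g i ≠ 0 := by
    intro i h
    have := hmonic (g i) (hgG i)
    rw [h] at this
    simp at this
  have hm : m ≠ 0 := by
    rintro rfl
    rw [Finset.univ_eq_empty, Finset.sum_empty] at hsum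
    exact hf0 hsum
  have hsne : (Finset.univ.image μ).Nonempty := by
    rw [Finset.image_nonempty]
    exact Finset.univ_nonempty_iff.mpr (Fin.pos_iff_nonempty.mp (Nat.pos_of_ne_zero hm))
  obtain ⟨μs, hμs_mem, hμs_max⟩ :=
    Finset.exists_strict_max' (auxLtw τ w) (auxLtw_trans τ w) (auxLtw_total τ w) _ hsne
  obtain ⟨i₀, -, hi₀⟩ := Finset.mem_image.mp hμs_mem
  have hmaxlt : ∀ i, i ≠ i₀ → auxLtw τ w (μ i) (μ i₀) := by
    intro i hi
    rw [hi₀]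
    exact hμs_max _ (Finset.mem_image_of_mem μ (Finset.mem_univ i))
      (fun h => hi (hinj (hi₀ ▸ h)))
  have hmaxle : ∀ i, μ i = μ i₀ ∨ auxLtw τ w (μ i) (μ i₀) := by
    intro i
    rcases eq_or_ne i i₀ with rfl | hi
    · exact Or.inl rfl
    · exact Or.inr (hmaxlt i hi)
  -- monomials of each summand
  have hterm : ∀ i, ∀ β ∈ (monomial (δ i) (c i) * g i).support,
      β = μ i ∨ auxLtw τ w β (μ i) := by
    intro i β hβ
    have h2 := MvPolynomial.support_mul _ _ hβ
    rw [Finset.mem_add] at h2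
    obtain ⟨δ', hδ', γ, hγ, rfl⟩ := h2
    have hδ'' : δ' = δ i := by
      have := MvPolynomial.support_monomial_subset hδ'
      rwa [Finset.mem_singleton] at this
    subst hδ''
    rcases eq_or_ne γ (τ.leadExp (g i)) with rfl | hγne
    · exact Or.inl rfl
    · refine Or.inr ?_
      have hwle : wdeg w (δ i + γ) ≤ wdeg w (μ i) := by
        simp only [hμdef, aux_wdeg_add]
        exact add_le_add_right (hWM (g i) (hgG i) γ hγ) _
      have hτlt : τ.lt (δ i + γ) (μ i) := by
        have := τ.add_right γ (τ.leadExp (g i)) (δ i) (τ.aux_leadExp_max (hg0 i) γ hγ hγne)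
        rwa [add_comm γ (δ i), add_comm (τ.leadExp (g i)) (δ i)] at this
      rcases lt_or_eq_of_le hwle with h | h
      · exact Or.inl h
      · exact Or.inr ⟨h, hτlt⟩
  have hcoeff_i0 : coeff (μ i₀) f = c i₀ := by
    rw [hsum, MvPolynomial.coeff_sum]
    rw [Finset.sum_eq_single i₀]
    · rw [MvPolynomial.coeff_monomial_mul', if_pos le_self_add,
        show μ i₀ - δ i₀ = τ.leadExp (g i₀) by rw [hμdef]; exact add_tsub_cancel_left _ _,
        hmonic (g i₀) (hgG i₀), mul_one]
    · intro b _ hb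
      by_contra hne
      have hmem : μ i₀ ∈ (monomial (δ b) (c b) * g b).support :=
        MvPolynomial.mem_support_iff.mpr hne
      rcases hterm b _ hmem with h | h
      · exact hb (hinj h.symm)
      · exact auxLtw_irrefl τ w _ (auxLtw_trans τ w _ _ _ h (hmaxlt b hb))
    · intro h
      exact absurd (Finset.mem_univ i₀) h
  have hμ_supp : μ i₀ ∈ f.support :=
    MvPolynomial.mem_support_iff.mpr (hcoeff_i0 ▸ hc i₀)
  have hsupf : ∀ β ∈ f.support, β = μ i₀ ∨ auxLtw τ w β (μ i₀) := by
    intro β hβ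
    rw [MvPolynomial.mem_support_iff, hsum, MvPolynomial.coeff_sum] at hβ
    obtain ⟨i, _, hi⟩ := Finset.exists_ne_zero_of_sum_ne_zero hβ
    have hmem : β ∈ (monomial (δ i) (c i) * g i).support := MvPolynomial.mem_support_iff.mpr hi
    rcases hterm i _ hmem with h | h
    · rcases hmaxle i with h' | h'
      · exact Or.inl (h.trans h')
      · exact Or.inr (by rw [h]; exact h')
    · rcases hmaxle i with h' | h'
      · exact Or.inr (by rw [← h']; exact h)
      · exact Or.inr (auxLtw_trans τ w _ _ _ h h')
  have hwmax : ∀ γ ∈ f.support, wdeg w γ ≤ wdeg w (μ i₀) := by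
    intro γ hγ
    rcases hsupf γ hγ with h | h
    · exact le_of_eq (congrArg (wdeg w) h)
    · exact auxLtw_wle h
  constructor
  · -- part (a)
    rw [aux_initialForm_eq_vcomp hμ_supp hwmax, hsum, aux_vcomp_sum]
    apply Ideal.sum_mem
    intro i _
    rw [aux_vcomp_monomial_mul]
    have hdeg : wdeg w (μ i) = wdeg w (δ i) + wdeg w (τ.leadExp (g i)) := by
      rw [hμdef, aux_wdeg_add]
    have hle : wdeg w (μ i) ≤ wdeg w (μ i₀) := by
      rcases hmaxle i with h | h
      · exact le_of_eq (congrArg (wdeg w) h)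
      · exact auxLtw_wle h
    rcases lt_or_eq_of_le hle with hlt | heq
    · have hz : vcomp w (wdeg w (μ i₀) - wdeg w (δ i)) (g i) = 0 := by
        apply aux_vcomp_eq_zero_of_lt
        intro β hβ
        have h1 : wdeg w β ≤ wdeg w (τ.leadExp (g i)) := hWM (g i) (hgG i) β hβ
        have h2 : wdeg w (τ.leadExp (g i)) < wdeg w (μ i₀) - wdeg w (δ i) := by
          rw [lt_sub_iff_add_lt, add_comm]
          rw [hdeg] at hlt
          exact hlt
        exact lt_of_le_of_lt h1 h2
      rw [hz, mul_zero]
      exact Ideal.zero_mem _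
    · have hd' : wdeg w (μ i₀) - wdeg w (δ i) = wdeg w (τ.leadExp (g i)) := by
        rw [← heq, hdeg]
        ring
      rw [hd', ← aux_initialForm_eq_vcomp (τ.aux_leadExp_mem (hg0 i)) (hWM (g i) (hgG i))]
      exact Ideal.mul_mem_left _ _ (Ideal.subset_span ⟨g i, hgG i, rfl⟩)
  · -- part (b)
    refine ⟨g i₀, hgG i₀, ?_⟩
    have hlead : τ.leadExp (initialForm w f) = μ i₀ := by
      apply τ.aux_leadExp_eq
      · exact aux_mem_support_initialForm.mpr ⟨hμ_supp, hwmax⟩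
      · intro β hβ hne
        obtain ⟨hβf, hβmax⟩ := aux_mem_support_initialForm.mp hβ
        rcases hsupf β hβf with h | h
        · exact absurd h hne
        · rcases h with h | ⟨-, h⟩
          · exact absurd (hβmax _ hμ_supp) (not_le.mpr h)
          · exact h
    rw [hlead]
    exact le_add_self

/- ### WM on the closed Gröbner cone -/

lemma aux_WM_of_S {τ : TermOrder n} {G : Set (MvPolynomial (Fin n) k)}
    {I : Ideal (MvPolynomial (Fin n) k)}
    (hGI : Ideal.span G = I)
    (hin : τ.initialIdeal I = Ideal.span (τ.initialTerm '' G))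
    (hmonic : ∀ g ∈ G, MvPolynomial.coeff (τ.leadExp g) g = 1)
    (hnotin : ∀ g ∈ G, ∀ α ∈ g.support, α ≠ τ.leadExp g →
      (monomial α 1 : MvPolynomial (Fin n) k) ∉ τ.initialIdeal I)
    {w : Fin n → ℝ} (hw : initialFormIdeal w I = τ.initialIdeal I) :
    auxWM τ G w := by
  intro g hg β hβ
  have hgI : g ∈ I := hGI ▸ Ideal.subset_span hg
  have hg0 : g ≠ 0 := by
    intro h
    have := hmonic g hg
    rw [h] at this
    simp at this
  have hmem : initialForm w g ∈ Ideal.span (τ.initialTerm '' G) := by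
    rw [← hin, ← hw]
    exact Ideal.subset_span ⟨g, hgI, rfl⟩
  have hL : τ.leadExp g ∈ (initialForm w g).support := by
    obtain ⟨α, hα⟩ := MvPolynomial.support_nonempty.mpr (aux_initialForm_ne_zero (w := w) hg0)
    obtain ⟨g', hg', hle⟩ := aux_mem_span_initialTerms hmonic hmem α hα
    have hαg : α ∈ g.support := aux_support_initialForm_subset w g hα
    rcases eq_or_ne α (τ.leadExp g) with rfl | hne
    · exact hα
    · exact absurd (aux_monomial_mem_span hmonic hg' hle 1)
        (hin ▸ hnotin g hg α hαg hne)
  exact (aux_mem_support_initialForm.mp hL).2 β hβ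

lemma aux_WM_of_Cprec {τ : TermOrder n} {G : Set (MvPolynomial (Fin n) k)}
    {I : Ideal (MvPolynomial (Fin n) k)}
    (hGI : Ideal.span G = I)
    (hin : τ.initialIdeal I = Ideal.span (τ.initialTerm '' G))
    (hmonic : ∀ g ∈ G, MvPolynomial.coeff (τ.leadExp g) g = 1)
    (hnotin : ∀ g ∈ G, ∀ α ∈ g.support, α ≠ τ.leadExp g →
      (monomial α 1 : MvPolynomial (Fin n) k) ∉ τ.initialIdeal I)
    {v : Fin n → ℝ} (hv : v ∈ Cprec τ I) :
    auxWM τ G v := by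
  intro g hg β hβ
  have hclosed : IsClosed {w : Fin n → ℝ | wdeg w β ≤ wdeg w (τ.leadExp g)} :=
    isClosed_le (aux_wdeg_continuous β) (aux_wdeg_continuous _)
  have hsub : {u : Fin n → ℝ | initialFormIdeal u I = τ.initialIdeal I} ⊆
      {w : Fin n → ℝ | wdeg w β ≤ wdeg w (τ.leadExp g)} :=
    fun u hu => aux_WM_of_S hGI hin hmonic hnotin hu g hg β hβ
  exact closure_minimal hsub hclosed hv

/- ### lifting graded slices of elements of the span of the initial forms -/

lemma aux_slice_lift {τ : TermOrder n} {G : Set (MvPolynomial (Fin n) k)}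
    {I : Ideal (MvPolynomial (Fin n) k)}
    (hGI : Ideal.span G = I)
    (hmonic : ∀ g ∈ G, MvPolynomial.coeff (τ.leadExp g) g = 1)
    {v : Fin n → ℝ} (hWM : auxWM τ G v)
    {h : MvPolynomial (Fin n) k} (hh : h ∈ Ideal.span ((initialForm v) '' G)) :
    ∀ d : ℝ, ∃ f ∈ I, vcomp v d f = vcomp v d h ∧ ∀ β ∈ f.support, wdeg v β ≤ d := by
  classical
  refine Submodule.span_induction ?_ ?_ ?_ ?_ hh
  · rintro x ⟨g, hg, rfl⟩ d
    have hg0 : g ≠ 0 := by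
      intro h
      have := hmonic g hg
      rw [h] at this
      simp at this
    have hgIv : initialForm v g = vcomp v (wdeg v (τ.leadExp g)) g :=
      aux_initialForm_eq_vcomp (τ.aux_leadExp_mem hg0) (hWM g hg)
    have hhom : ∀ β ∈ (initialForm v g).support, wdeg v β = wdeg v (τ.leadExp g) := by
      intro β hβ
      obtain ⟨hβg, hβmax⟩ := aux_mem_support_initialForm.mp hβ
      exact le_antisymm (hWM g hg β hβg) (hβmax _ (τ.aux_leadExp_mem hg0))
    by_cases hd : d = wdeg v (τ.leadExp g)
    · refine ⟨g, hGI ▸ Ideal.subset_span hg, ?_, fun β hβ => hd ▸ hWM g hg β hβ⟩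
      rw [aux_vcomp_of_homog v d (wdeg v (τ.leadExp g)) _ hhom, if_pos hd, hd, ← hgIv]
    · refine ⟨0, Ideal.zero_mem I, ?_, by simp⟩
      rw [aux_vcomp_zero, aux_vcomp_of_homog v d (wdeg v (τ.leadExp g)) _ hhom, if_neg hd]
  · intro d
    exact ⟨0, Ideal.zero_mem I, by rw [aux_vcomp_zero], by simp⟩
  · rintro x y _ _ ihx ihy d
    obtain ⟨f1, hf1I, hf1, hb1⟩ := ihx d
    obtain ⟨f2, hf2I, hf2, hb2⟩ := ihy d
    refine ⟨f1 + f2, I.add_mem hf1I hf2I, ?_, ?_⟩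
    · rw [aux_vcomp_add, aux_vcomp_add, hf1, hf2]
    · intro β hβ
      rcases Finset.mem_union.mp (MvPolynomial.support_add hβ) with h | h
      · exact hb1 β h
      · exact hb2 β h
  · rintro r x _ ih d
    choose F hFI hFs hFb using ih
    refine ⟨∑ β ∈ r.support, monomial β (coeff β r) * F (d - wdeg v β),
      Ideal.sum_mem I (fun β _ => I.mul_mem_left _ (hFI _)), ?_, ?_⟩
    · rw [smul_eq_mul]
      have hx : r * x = ∑ β ∈ r.support, monomial β (coeff β r) * x := by
        rw [← Finset.sum_mul, MvPolynomial.support_sum_monomial_coeff]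
      rw [hx, aux_vcomp_sum, aux_vcomp_sum]
      apply Finset.sum_congr rfl
      intro β _
      rw [aux_vcomp_monomial_mul, aux_vcomp_monomial_mul, hFs]
    · intro β' hβ'
      have := MvPolynomial.support_sum hβ'
      rw [Finset.mem_biUnion] at this
      obtain ⟨β, hβ, hβ'mem⟩ := this
      have h2 := MvPolynomial.support_mul _ _ hβ'mem
      rw [Finset.mem_add] at h2
      obtain ⟨δ', hδ', γ, hγ, rfl⟩ := h2
      have hδ'' : δ' = β := by
        have := MvPolynomial.support_monomial_subset hδ'
        rwa [Finset.mem_singleton] at this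
      subst hδ''
      rw [aux_wdeg_add]
      have := hFb (d - wdeg v δ') γ hγ
      linarith

/- ### initial exponents of elements of in_v(I) are divisible by leading exponents -/

lemma aux_H2 {τ : TermOrder n} {G : Set (MvPolynomial (Fin n) k)}
    {I : Ideal (MvPolynomial (Fin n) k)}
    (hGI : Ideal.span G = I)
    (hin : τ.initialIdeal I = Ideal.span (τ.initialTerm '' G))
    (hmonic : ∀ g ∈ G, MvPolynomial.coeff (τ.leadExp g) g = 1)
    {v : Fin n → ℝ} (hWM : auxWM τ G v) :
    ∀ h ∈ initialFormIdeal v I, h ≠ 0 → ∃ g ∈ G, τ.leadExp g ≤ τ.leadExp h := by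
  have hsub : initialFormIdeal v I ≤ Ideal.span ((initialForm v) '' G) := by
    rw [initialFormIdeal]
    refine Ideal.span_le.mpr ?_
    rintro p ⟨f, hf, rfl⟩
    rcases eq_or_ne f 0 with rfl | hf0
    · rw [aux_initialForm_zero]
      exact Ideal.zero_mem _
    · exact (aux_GL hGI hin hmonic hWM hf hf0).1
  intro h hh hh0
  obtain ⟨f, hfI, hfs, hfb⟩ := aux_slice_lift hGI hmonic hWM (hsub hh)
    (wdeg v (τ.leadExp h))
  set α := τ.leadExp h with hα
  set d := wdeg v α with hd
  have hαh : α ∈ h.support := τ.aux_leadExp_mem hh0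
  have hch : coeff α (vcomp v d h) = coeff α h := aux_coeff_vcomp_of_deg rfl
  have hslice0 : vcomp v d h ≠ 0 := by
    intro hz
    rw [hz, MvPolynomial.coeff_zero] at hch
    exact MvPolynomial.mem_support_iff.mp hαh hch.symm
  have hf0 : f ≠ 0 := by
    rintro rfl
    rw [aux_vcomp_zero] at hfs
    exact hslice0 hfs.symm
  have hαf : α ∈ f.support := by
    rw [MvPolynomial.mem_support_iff]
    have : coeff α (vcomp v d f) = coeff α f := aux_coeff_vcomp_of_deg rfl
    rw [← this, hfs, hch]
    exact MvPolynomial.mem_support_iff.mp hαh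
  have hmaxf : ∀ γ ∈ f.support, wdeg v γ ≤ wdeg v α := fun γ hγ => hfb γ hγ
  have h3 : initialForm v f = vcomp v d h := by
    rw [aux_initialForm_eq_vcomp hαf hmaxf, ← hd, hfs]
  obtain ⟨-, g, hg, hle⟩ := aux_GL hGI hin hmonic hWM hfI hf0
  have h4 : τ.leadExp (vcomp v d h) = α := by
    apply τ.aux_leadExp_eq
    · rw [MvPolynomial.mem_support_iff, hch]
      exact MvPolynomial.mem_support_iff.mp hαh
    · intro β hβ hne
      exact τ.aux_leadExp_max hh0 β (aux_support_vcomp_subset v d h hβ) hne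
  rw [h3, h4] at hle
  exact ⟨g, hg, hle⟩


/-- Let `v ∈ C_≺(I)`. Then for every `u ∈ ℝ^n`, `in_u(I) = in_v(I)` iff
`in_u(g) = in_v(g)` for every `g` in the reduced Gröbner basis `G_≺(I)`. -/
theorem initialFormIdeal_eq_iff_initialForms_eq (τ : TermOrder n)
    (I : Ideal (MvPolynomial (Fin n) k))
    (G : Set (MvPolynomial (Fin n) k)) (hG : IsReducedGroebnerBasis τ I G)
    (v : Fin n → ℝ) (hv : v ∈ Cprec τ I) (u : Fin n → ℝ) :
    initialFormIdeal u I = initialFormIdeal v I ↔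
      ∀ g ∈ G, initialForm u g = initialForm v g := by
  obtain ⟨⟨-, hGI, hin⟩, hmonic, hnotin, -⟩ := hG
  have hg0 : ∀ g ∈ G, g ≠ 0 := by
    intro g hg h
    have := hmonic g hg
    rw [h] at this
    simp at this
  have hWMv : auxWM τ G v := aux_WM_of_Cprec hGI hin hmonic hnotin hv
  have hH2 := aux_H2 hGI hin hmonic hWMv
  have hspan : ∀ w : Fin n → ℝ, auxWM τ G w →
      initialFormIdeal w I = Ideal.span ((initialForm w) '' G) := by
    intro w hWM
    apply le_antisymm
    · rw [initialFormIdeal]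
      refine Ideal.span_le.mpr ?_
      rintro p ⟨f, hf, rfl⟩
      rcases eq_or_ne f 0 with rfl | hf0
      · rw [aux_initialForm_zero]
        exact Ideal.zero_mem _
      · exact (aux_GL hGI hin hmonic hWM hf hf0).1
    · refine Ideal.span_le.mpr ?_
      rintro p ⟨g, hg, rfl⟩
      exact Ideal.subset_span ⟨g, hGI ▸ Ideal.subset_span hg, rfl⟩
  constructor
  · -- forward direction
    intro hEq g hg
    have hgI : g ∈ I := hGI ▸ Ideal.subset_span hg
    have hgne : g ≠ 0 := hg0 g hg
    have hmemu : initialForm u g ∈ initialFormIdeal v I := by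
      rw [← hEq]
      exact Ideal.subset_span ⟨g, hgI, rfl⟩
    have hmemv : initialForm v g ∈ initialFormIdeal v I := Ideal.subset_span ⟨g, hgI, rfl⟩
    have hu0 : initialForm u g ≠ 0 := aux_initialForm_ne_zero hgne
    obtain ⟨g₁, hg₁, hle₁⟩ := hH2 _ hmemu hu0
    have hLu : τ.leadExp (initialForm u g) = τ.leadExp g := by
      have hαg : τ.leadExp (initialForm u g) ∈ g.support :=
        aux_support_initialForm_subset u g (τ.aux_leadExp_mem hu0)
      by_contra hne
      exact hnotin g hg _ hαg hne
        (by rw [hin]; exact aux_monomial_mem_span hmonic hg₁ hle₁ 1)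
    have hLusupp : τ.leadExp g ∈ (initialForm u g).support := hLu ▸ τ.aux_leadExp_mem hu0
    have hLvsupp : τ.leadExp g ∈ (initialForm v g).support :=
      aux_mem_support_initialForm.mpr ⟨τ.aux_leadExp_mem hgne, hWMv g hg⟩
    set D := initialForm u g - initialForm v g with hD
    have hDmem : D ∈ initialFormIdeal v I := Ideal.sub_mem _ hmemu hmemv
    have hDsupp : ∀ β ∈ D.support, β ∈ g.support ∧ β ≠ τ.leadExp g := by
      intro β hβ
      rw [MvPolynomial.mem_support_iff, hD, MvPolynomial.coeff_sub] at hβ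
      constructor
      · by_contra hβg
        have h1 : coeff β (initialForm u g) = 0 := by
          rw [aux_coeff_initialForm, if_neg]
          rintro ⟨hmem, -⟩
          exact hβg hmem
        have h2 : coeff β (initialForm v g) = 0 := by
          rw [aux_coeff_initialForm, if_neg]
          rintro ⟨hmem, -⟩
          exact hβg hmem
        rw [h1, h2, sub_self] at hβ
        exact hβ rfl
      · rintro rfl
        rw [aux_coeff_initialForm_of_mem hLusupp, aux_coeff_initialForm_of_mem hLvsupp,
          sub_self] at hβ
        exact hβ rfl
    rcases eq_or_ne D 0 with hD0 | hD0
    · exact sub_eq_zero.mp hD0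
    · obtain ⟨g₂, hg₂, hle₂⟩ := hH2 _ hDmem hD0
      obtain ⟨h1, h2⟩ := hDsupp _ (τ.aux_leadExp_mem hD0)
      exact absurd (by rw [hin]; exact aux_monomial_mem_span hmonic hg₂ hle₂ 1)
        (hnotin g hg _ h1 h2)
  · -- backward direction
    intro hAll
    have hWMu : auxWM τ G u := by
      intro g hg β hβ
      have hLusupp : τ.leadExp g ∈ (initialForm u g).support := by
        rw [hAll g hg]
        exact aux_mem_support_initialForm.mpr ⟨τ.aux_leadExp_mem (hg0 g hg), hWMv g hg⟩
      exact (aux_mem_support_initialForm.mp hLusupp).2 β hβ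
    rw [hspan u hWMu, hspan v hWMv]
    exact congrArg Ideal.span (Set.image_congr hAll)
end

section
/- Let I ⊆ k[x_1,…,x_n] be an ideal, ≺ a term order, and v ∈ ℝ^n. Then in_v(I) = in_≺(I) if and only if in_v(g) = in_≺(g) for every g in the reduced Gröbner basis G_≺(I). -/
open MvPolynomial

variable {n : ℕ} {k : Type*} [Field k]

/-! ### Auxiliary lemmas -/

section Aux

variable (τ : TermOrder n)

/-- Every nonempty finite set of exponents has a `τ`-maximum. -/
lemma TermOrder.exists_max :
    ∀ s : Finset (Fin n →₀ ℕ), s.Nonempty → ∃ α ∈ s, ∀ β ∈ s, β ≠ α → τ.lt β α := by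
  intro s
  classical
  induction s using Finset.induction_on with
  | empty => intro hs; exact absurd hs (by simp)
  | @insert a s ha ih =>
    intro _
    rcases s.eq_empty_or_nonempty with rfl | hs'
    · exact ⟨a, by simp, by simp⟩
    · obtain ⟨α, hαs, hmax⟩ := ih hs'
      have haα : a ≠ α := fun h => ha (h ▸ hαs)
      rcases τ.total a α haα with h | h
      · refine ⟨α, Finset.mem_insert_of_mem hαs, fun β hβ hne => ?_⟩
        rcases Finset.mem_insert.1 hβ with rfl | hβs
        · exact h
        · exact hmax β hβs hne
      · refine ⟨a, Finset.mem_insert_self _ _, fun β hβ hne => ?_⟩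
        rcases Finset.mem_insert.1 hβ with rfl | hβs
        · exact absurd rfl hne
        · by_cases hβα : β = α
          · exact hβα ▸ h
          · exact τ.trans _ _ _ (hmax β hβs hβα) h

lemma TermOrder.leadExp_spec {f : MvPolynomial (Fin n) k} (hf : f ≠ 0) :
    τ.leadExp f ∈ f.support ∧ ∀ β ∈ f.support, β ≠ τ.leadExp f → τ.lt β (τ.leadExp f) := by
  have h : ∃ α, α ∈ f.support ∧ ∀ β ∈ f.support, β ≠ α → τ.lt β α := by
    obtain ⟨α, hα, hm⟩ := τ.exists_max f.support (MvPolynomial.support_nonempty.2 hf)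
    exact ⟨α, hα, hm⟩
  unfold TermOrder.leadExp
  rw [dif_pos h]
  exact h.choose_spec

lemma TermOrder.le_imp (a b : Fin n →₀ ℕ) (h : a ≤ b) : a = b ∨ τ.lt a b := by
  obtain ⟨c, rfl⟩ := le_iff_exists_add.mp h
  by_cases hc : c = 0
  · exact Or.inl (by simp [hc])
  · refine Or.inr ?_
    have := τ.add_right 0 c a (τ.zero_lt c hc)
    simpa [add_comm] using this

lemma TermOrder.lt_wf : WellFounded τ.lt := by
  haveI : IsStrictOrder (Fin n →₀ ℕ) τ.lt :=
    { irrefl := τ.irrefl, trans := τ.trans }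
  rw [RelEmbedding.wellFounded_iff_isEmpty]
  constructor
  intro f
  obtain ⟨m, m', hlt, hle⟩ :=
    Set.isPWO_of_wellQuasiOrderedLE (Set.univ : Set (Fin n →₀ ℕ)) (fun i => ⟨f i, Set.mem_univ _⟩)
  have h1 : τ.lt (f m') (f m) := f.map_rel_iff.2 hlt
  rcases τ.le_imp (f m) (f m') hle with heq | h2
  · exact τ.irrefl _ (heq ▸ h1)
  · exact τ.irrefl _ (τ.trans _ _ _ h1 h2)

variable {τ}

/-- Members of the span of the initial terms of a monic family have all their
monomials divisible by some lead monomial. -/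
lemma TermOrder.mem_span_initialTerms {G : Set (MvPolynomial (Fin n) k)}
    {p : MvPolynomial (Fin n) k} (hp : p ∈ Ideal.span (τ.initialTerm '' G)) :
    ∀ β ∈ p.support, ∃ g ∈ G, ∃ γ, β = γ + τ.leadExp g := by
  classical
  refine Submodule.span_induction ?_ ?_ ?_ ?_ hp
  · rintro x ⟨g, hg, rfl⟩ β hβ
    have hsub := MvPolynomial.support_monomial_subset (s := τ.leadExp g)
      (a := g.coeff (τ.leadExp g)) (R := k)
    have : β = τ.leadExp g := by
      have := hsub hβ
      simpa using this
    exact ⟨g, hg, 0, by simp [this]⟩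
  · intro β hβ; simp at hβ
  · intro x y _ _ hx hy β hβ
    rcases Finset.mem_union.1 (MvPolynomial.support_add hβ) with h | h
    · exact hx β h
    · exact hy β h
  · intro a x _ hx β hβ
    rw [smul_eq_mul] at hβ
    obtain ⟨b, hb, d, hd, rfl⟩ := Finset.mem_add.1 (MvPolynomial.support_mul a x hβ)
    obtain ⟨g, hg, γ, hγ⟩ := hx d hd
    exact ⟨g, hg, b + γ, by rw [hγ, add_assoc]⟩

lemma TermOrder.monomial_mem_span {G : Set (MvPolynomial (Fin n) k)}
    (hmonic : ∀ g ∈ G, g.coeff (τ.leadExp g) = 1)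
    {β : Fin n →₀ ℕ} (c : k) (h : ∃ g ∈ G, ∃ γ, β = γ + τ.leadExp g) :
    (monomial β c : MvPolynomial (Fin n) k) ∈ Ideal.span (τ.initialTerm '' G) := by
  obtain ⟨g, hg, γ, rfl⟩ := h
  have heq : (monomial (γ + τ.leadExp g) c : MvPolynomial (Fin n) k)
      = monomial γ c * τ.initialTerm g := by
    rw [TermOrder.initialTerm, hmonic g hg, MvPolynomial.monomial_mul, mul_one]
  rw [heq]
  exact Ideal.mul_mem_left _ _ (Ideal.subset_span ⟨g, hg, rfl⟩)

lemma wdeg_add (v : Fin n → ℝ) (a b : Fin n →₀ ℕ) :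
    wdeg v (a + b) = wdeg v a + wdeg v b := by
  unfold wdeg
  rw [← Finset.sum_add_distrib]
  refine Finset.sum_congr rfl fun i _ => ?_
  rw [Finsupp.add_apply]
  push_cast
  ring

lemma coeff_initialForm (v : Fin n → ℝ) (f : MvPolynomial (Fin n) k) (β : Fin n →₀ ℕ) :
    (initialForm v f).coeff β =
      if β ∈ f.support ∧ ∀ γ ∈ f.support, wdeg v γ ≤ wdeg v β then f.coeff β else 0 := by
  classical
  have h1 : initialForm v f =
      ∑ α ∈ f.support.filter (fun α => ∀ β ∈ f.support, wdeg v β ≤ wdeg v α),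
        monomial α (f.coeff α) := by
    unfold initialForm
    exact Finset.sum_congr (Finset.filter_congr_decidable _ _ _) (fun _ _ => rfl)
  rw [h1, MvPolynomial.coeff_sum]
  rw [Finset.sum_congr rfl (fun α _ => MvPolynomial.coeff_monomial β α (f.coeff α))]
  rw [Finset.sum_ite_eq' (f.support.filter _) β (fun α => f.coeff α)]
  simp only [Finset.mem_filter]

lemma initialForm_zero (v : Fin n → ℝ) : initialForm v (0 : MvPolynomial (Fin n) k) = 0 := by
  unfold initialForm
  simp

lemma coeff_initialForm_of_max {v : Fin n → ℝ} {f : MvPolynomial (Fin n) k} {D : ℝ}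
    (hb : ∀ β ∈ f.support, wdeg v β ≤ D)
    (ha : ∃ β0, wdeg v β0 = D ∧ f.coeff β0 ≠ 0) (β : Fin n →₀ ℕ) :
    (initialForm v f).coeff β = if wdeg v β = D then f.coeff β else 0 := by
  classical
  obtain ⟨β0, hβ0D, hβ0⟩ := ha
  rw [coeff_initialForm]
  by_cases hD : wdeg v β = D
  · rw [if_pos hD]
    by_cases hs : β ∈ f.support
    · rw [if_pos ⟨hs, fun γ hγ => (hb γ hγ).trans hD.ge⟩]
    · rw [MvPolynomial.notMem_support_iff.1 hs]
      split_ifs <;> rfl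
  · rw [if_neg hD]
    rcases Classical.em (β ∈ f.support ∧ ∀ γ ∈ f.support, wdeg v γ ≤ wdeg v β) with h | h
    · exfalso
      have h1 : D ≤ wdeg v β := hβ0D ▸ h.2 β0 (MvPolynomial.mem_support_iff.2 hβ0)
      exact hD (le_antisymm (hb β h.1) h1)
    · rw [if_neg h]

lemma support_initialForm_subset {v : Fin n → ℝ} {f : MvPolynomial (Fin n) k} :
    (initialForm v f).support ⊆ f.support := by
  intro β hβ
  rw [MvPolynomial.mem_support_iff, coeff_initialForm] at hβ
  split_ifs at hβ with h
  · exact h.1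
  · exact absurd rfl hβ

/-- If `in_v(g) = in_≺(g)` for a monic `g`, then the lead exponent of `g` is the
unique `wdeg`-maximizer of `g`. -/
lemma weights_of_initialForm_eq {v : Fin n → ℝ} {g : MvPolynomial (Fin n) k}
    (hg1 : g.coeff (τ.leadExp g) = 1)
    (h : initialForm v g = τ.initialTerm g) :
    (∀ δ ∈ g.support, wdeg v δ ≤ wdeg v (τ.leadExp g)) ∧
    (∀ δ ∈ g.support, δ ≠ τ.leadExp g → wdeg v δ < wdeg v (τ.leadExp g)) := by
  classical
  have hbound : ∀ δ ∈ g.support, wdeg v δ ≤ wdeg v (τ.leadExp g) := by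
    have hcoeff : (initialForm v g).coeff (τ.leadExp g) ≠ 0 := by
      rw [h, TermOrder.initialTerm, MvPolynomial.coeff_monomial, if_pos rfl, hg1]
      exact one_ne_zero
    rw [coeff_initialForm] at hcoeff
    split_ifs at hcoeff with hcond
    · exact hcond.2
    · exact absurd rfl hcoeff
  refine ⟨hbound, fun δ hδ hne => ?_⟩
  have hcoeff0 : (initialForm v g).coeff δ = 0 := by
    rw [h, TermOrder.initialTerm, MvPolynomial.coeff_monomial, if_neg (fun hh => hne hh.symm)]
  rw [coeff_initialForm] at hcoeff0
  split_ifs at hcoeff0 with hcond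
  · exact absurd hcoeff0 (MvPolynomial.mem_support_iff.1 hδ)
  · push_neg at hcond
    obtain ⟨ρ, hρ, hρδ⟩ := hcond hδ
    exact lt_of_lt_of_le hρδ (hbound ρ hρ)

/-- Key lemma: if every element of a monic Gröbner basis `G` has `in_v(g) = in_≺(g)`,
then `in_v(f)` lies in the span of the initial terms for every `f ∈ I`. -/
lemma TermOrder.initialForm_mem_span {I : Ideal (MvPolynomial (Fin n) k)}
    {G : Set (MvPolynomial (Fin n) k)}
    (hspan : Ideal.span G = I)
    (hinit : τ.initialIdeal I = Ideal.span (τ.initialTerm '' G))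
    (hmonic : ∀ g ∈ G, g.coeff (τ.leadExp g) = 1)
    {v : Fin n → ℝ} (hv : ∀ g ∈ G, initialForm v g = τ.initialTerm g) :
    ∀ f ∈ I, initialForm v f ∈ Ideal.span (τ.initialTerm '' G) := by
  classical
  suffices hmain : ∀ α : Fin n →₀ ℕ, ∀ f ∈ I, f ≠ 0 → τ.leadExp f = α →
      initialForm v f ∈ Ideal.span (τ.initialTerm '' G) by
    intro f hf
    by_cases hf0 : f = 0
    · rw [hf0, initialForm_zero]; exact zero_mem _
    · exact hmain _ f hf hf0 rfl
  refine fun α => τ.lt_wf.induction (C := fun α => ∀ f ∈ I, f ≠ 0 → τ.leadExp f = α →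
    initialForm v f ∈ Ideal.span (τ.initialTerm '' G)) α ?_
  intro α IH f hfI hf0 hlead
  subst hlead
  have hspec := τ.leadExp_spec (k := k) (f := f) hf0
  set c := f.coeff (τ.leadExp f) with hc_def
  have hc : c ≠ 0 := MvPolynomial.mem_support_iff.1 hspec.1
  -- find g ∈ G whose lead monomial divides the lead monomial of f
  have hmem : τ.initialTerm f ∈ Ideal.span (τ.initialTerm '' G) := by
    rw [← hinit]
    exact Ideal.subset_span ⟨f, hfI, hf0, rfl⟩
  have hsupp : τ.leadExp f ∈ (τ.initialTerm f).support := by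
    rw [TermOrder.initialTerm, MvPolynomial.mem_support_iff, MvPolynomial.coeff_monomial,
      if_pos rfl]
    exact hc
  obtain ⟨g, hgG, γ, hαγ⟩ := TermOrder.mem_span_initialTerms hmem _ hsupp
  have hg1 : g.coeff (τ.leadExp g) = 1 := hmonic g hgG
  have hgne : g ≠ 0 := fun hh => by simp [hh] at hg1
  have hgspec := τ.leadExp_spec (k := k) (f := g) hgne
  obtain ⟨hwle, hwlt⟩ := weights_of_initialForm_eq hg1 (hv g hgG)
  set h := (monomial γ c : MvPolynomial (Fin n) k) * g with hh_def
  have hhI : h ∈ I := Ideal.mul_mem_left _ _ (hspan ▸ Ideal.subset_span hgG)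
  have hcoeffh : ∀ β, h.coeff β ≠ 0 → ∃ δ ∈ g.support, β = γ + δ := by
    intro β hβ
    have hβ' := MvPolynomial.support_mul _ _ (MvPolynomial.mem_support_iff.2 hβ)
    obtain ⟨b, hb, d, hd, hbd⟩ := Finset.mem_add.1 hβ'
    have hbγ : b = γ := by
      have := MvPolynomial.support_monomial_subset (s := γ) (a := c) (R := k) hb
      simpa using this
    exact ⟨d, hd, by rw [← hbd, hbγ]⟩
  have hhα : h.coeff (τ.leadExp f) = c := by
    rw [hαγ, hh_def, MvPolynomial.coeff_monomial_mul, hg1, mul_one]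
  have hwh : ∀ β, h.coeff β ≠ 0 →
      wdeg v β ≤ wdeg v (τ.leadExp f) ∧ (β ≠ τ.leadExp f → wdeg v β < wdeg v (τ.leadExp f)) := by
    intro β hβ
    obtain ⟨δ, hδ, rfl⟩ := hcoeffh β hβ
    rw [hαγ, wdeg_add, wdeg_add]
    constructor
    · exact add_le_add_right (hwle δ hδ) _
    · intro hne
      have hδne : δ ≠ τ.leadExp g := fun hh => hne (by rw [hh])
      exact add_lt_add_right (hwlt δ hδ hδne) _
  have hf'lt : ∀ β, (f - h).coeff β ≠ 0 → τ.lt β (τ.leadExp f) := by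
    intro β hβ
    have hβα : β ≠ τ.leadExp f := by
      rintro rfl
      apply hβ
      rw [MvPolynomial.coeff_sub, hhα, sub_self]
    rw [MvPolynomial.coeff_sub] at hβ
    have hor : f.coeff β ≠ 0 ∨ h.coeff β ≠ 0 := by
      by_contra hno
      push_neg at hno
      rw [hno.1, hno.2, sub_zero] at hβ
      exact hβ rfl
    rcases hor with h1 | h2
    · exact hspec.2 β (MvPolynomial.mem_support_iff.2 h1) hβα
    · obtain ⟨δ, hδ, rfl⟩ := hcoeffh _ h2
      have hδne : δ ≠ τ.leadExp g := by
        rintro rfl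
        exact hβα hαγ.symm
      have hlt := τ.add_right δ (τ.leadExp g) γ (hgspec.2 δ hδ hδne)
      rw [add_comm δ γ, add_comm (τ.leadExp g) γ] at hlt
      rw [hαγ]
      exact hlt
  -- the maximal weight of f
  obtain ⟨β0, hβ0supp, hβ0max⟩ :=
    Finset.exists_max_image f.support (wdeg v) (MvPolynomial.support_nonempty.2 hf0)
  set D := wdeg v β0 with hD_def
  have hbf : ∀ β ∈ f.support, wdeg v β ≤ D := hβ0max
  have hcf := coeff_initialForm_of_max hbf ⟨β0, rfl, MvPolynomial.mem_support_iff.1 hβ0supp⟩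
  have hαD : wdeg v (τ.leadExp f) ≤ D := hbf _ hspec.1
  -- the correction term
  have hTmem : (monomial (τ.leadExp f) c : MvPolynomial (Fin n) k) ∈
      Ideal.span (τ.initialTerm '' G) :=
    TermOrder.monomial_mem_span hmonic c ⟨g, hgG, γ, hαγ⟩
  by_cases hcase : wdeg v (τ.leadExp f) = D
  · -- Case B : the lead term of f has maximal weight
    have hhD : ∀ β, wdeg v β = D → β ≠ τ.leadExp f → h.coeff β = 0 := by
      intro β hβD hβne
      by_contra hne
      have := (hwh β hne).2 hβne
      rw [hβD, hcase] at this
      exact lt_irrefl _ this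
    by_cases hB : ∀ β, wdeg v β = D → (f - h).coeff β = 0
    · -- B1 : in_v f is exactly the correction term
      have heq : initialForm v f = monomial (τ.leadExp f) c := by
        ext β
        rw [hcf β, MvPolynomial.coeff_monomial]
        by_cases h1 : wdeg v β = D
        · rw [if_pos h1]
          by_cases h2 : τ.leadExp f = β
          · rw [if_pos h2, ← h2]
          · rw [if_neg h2]
            have hfh := hB β h1
            rw [MvPolynomial.coeff_sub, sub_eq_zero] at hfh
            rw [hfh, hhD β h1 (fun hh => h2 hh.symm)]
        · rw [if_neg h1, if_neg (fun h2 => h1 (by rw [← h2]; exact hcase))]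
      rw [heq]
      exact hTmem
    · -- B2 : in_v f = in_v (f - h) + correction term
      push_neg at hB
      obtain ⟨β1, hβ1D, hβ1⟩ := hB
      have hf'0 : f - h ≠ 0 := fun h0 => hβ1 (by rw [h0]; simp)
      have hbf' : ∀ β ∈ (f - h).support, wdeg v β ≤ D := by
        intro β hβ
        rw [MvPolynomial.mem_support_iff, MvPolynomial.coeff_sub] at hβ
        have hor : f.coeff β ≠ 0 ∨ h.coeff β ≠ 0 := by
          by_contra hno
          push_neg at hno
          rw [hno.1, hno.2, sub_zero] at hβ
          exact hβ rfl
        rcases hor with h1 | h2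
        · exact hbf β (MvPolynomial.mem_support_iff.2 h1)
        · exact (hwh β h2).1.trans hαD
      have hcf' := coeff_initialForm_of_max hbf' ⟨β1, hβ1D, hβ1⟩
      have heq : initialForm v f = initialForm v (f - h) + monomial (τ.leadExp f) c := by
        ext β
        rw [MvPolynomial.coeff_add, hcf β, hcf' β, MvPolynomial.coeff_monomial]
        by_cases h1 : wdeg v β = D
        · rw [if_pos h1, if_pos h1, MvPolynomial.coeff_sub]
          by_cases h2 : τ.leadExp f = β
          · rw [if_pos h2, ← h2, hhα]
            ring
          · rw [if_neg h2, hhD β h1 (fun hh => h2 hh.symm)]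
            ring
        · rw [if_neg h1, if_neg h1, if_neg (fun h2 => h1 (by rw [← h2]; exact hcase)), add_zero]
      have hIH := IH (τ.leadExp (f - h))
        (hf'lt _ (MvPolynomial.mem_support_iff.1 (τ.leadExp_spec hf'0).1))
        (f - h) (I.sub_mem hfI hhI) hf'0 rfl
      rw [heq]
      exact add_mem hIH hTmem
  · -- Case A : the lead term of f has non-maximal weight; in_v f = in_v (f - h)
    have hltD : wdeg v (τ.leadExp f) < D := lt_of_le_of_ne hαD hcase
    have hfh0 : ∀ β, wdeg v β = D → h.coeff β = 0 := by
      intro β hβD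
      by_contra hne
      have := (hwh β hne).1
      rw [hβD] at this
      exact absurd (this.trans_lt hltD) (lt_irrefl _)
    have hf'β0 : (f - h).coeff β0 ≠ 0 := by
      rw [MvPolynomial.coeff_sub, hfh0 β0 rfl, sub_zero]
      exact MvPolynomial.mem_support_iff.1 hβ0supp
    have hf'0 : f - h ≠ 0 := fun h0 => hf'β0 (by rw [h0]; simp)
    have hbf' : ∀ β ∈ (f - h).support, wdeg v β ≤ D := by
      intro β hβ
      rw [MvPolynomial.mem_support_iff, MvPolynomial.coeff_sub] at hβ
      have hor : f.coeff β ≠ 0 ∨ h.coeff β ≠ 0 := by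
        by_contra hno
        push_neg at hno
        rw [hno.1, hno.2, sub_zero] at hβ
        exact hβ rfl
      rcases hor with h1 | h2
      · exact hbf β (MvPolynomial.mem_support_iff.2 h1)
      · exact (hwh β h2).1.trans hαD
    have hcf' := coeff_initialForm_of_max hbf' ⟨β0, rfl, hf'β0⟩
    have heq : initialForm v (f - h) = initialForm v f := by
      ext β
      rw [hcf β, hcf' β]
      by_cases h1 : wdeg v β = D
      · rw [if_pos h1, if_pos h1, MvPolynomial.coeff_sub, hfh0 β h1, sub_zero]
      · rw [if_neg h1, if_neg h1]
    have hIH := IH (τ.leadExp (f - h))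
      (hf'lt _ (MvPolynomial.mem_support_iff.1 (τ.leadExp_spec hf'0).1))
      (f - h) (I.sub_mem hfI hhI) hf'0 rfl
    rwa [heq] at hIH

end Aux

/-- `in_v(I) = in_≺(I)` iff `in_v(g) = in_≺(g)` for every `g` in the reduced
Gröbner basis `G_≺(I)`. -/
theorem initialFormIdeal_eq_initialIdeal_iff (τ : TermOrder n)
    (I : Ideal (MvPolynomial (Fin n) k))
    (G : Set (MvPolynomial (Fin n) k)) (hG : IsReducedGroebnerBasis τ I G)
    (v : Fin n → ℝ) :
    initialFormIdeal v I = τ.initialIdeal I ↔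
      ∀ g ∈ G, initialForm v g = τ.initialTerm g := by
  classical
  obtain ⟨⟨hGfin, hGspan, hGinit⟩, hmonic, hred, -⟩ := hG
  constructor
  · -- forward direction
    intro hEq g hgG
    have hg1 : g.coeff (τ.leadExp g) = 1 := hmonic g hgG
    have hg0 : g ≠ 0 := fun hh => by simp [hh] at hg1
    have hgI : g ∈ I := hGspan ▸ Ideal.subset_span hgG
    have hmem : initialForm v g ∈ Ideal.span (τ.initialTerm '' G) := by
      rw [← hGinit, ← hEq]
      exact Ideal.subset_span ⟨g, hgI, rfl⟩
    have hsub : ∀ β ∈ (initialForm v g).support, β = τ.leadExp g := by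
      intro β hβ
      by_contra hne
      have hmon : (monomial β (1 : k) : MvPolynomial (Fin n) k) ∈ τ.initialIdeal I := by
        rw [hGinit]
        exact TermOrder.monomial_mem_span hmonic 1
          (TermOrder.mem_span_initialTerms hmem β hβ)
      exact hred g hgG β (support_initialForm_subset hβ) hne hmon
    have hne0 : initialForm v g ≠ 0 := by
      obtain ⟨β0, hβ0supp, hβ0max⟩ :=
        Finset.exists_max_image g.support (wdeg v) (MvPolynomial.support_nonempty.2 hg0)
      have := coeff_initialForm_of_max (v := v) hβ0max
        ⟨β0, rfl, MvPolynomial.mem_support_iff.1 hβ0supp⟩ β0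
      rw [if_pos rfl] at this
      intro h0
      rw [h0, MvPolynomial.coeff_zero] at this
      exact MvPolynomial.mem_support_iff.1 hβ0supp this.symm
    obtain ⟨β1, hβ1⟩ := MvPolynomial.support_nonempty.2 hne0
    have hβ1lead : β1 = τ.leadExp g := hsub β1 hβ1
    have hcl : (initialForm v g).coeff (τ.leadExp g) ≠ 0 :=
      MvPolynomial.mem_support_iff.1 (hβ1lead ▸ hβ1)
    ext β
    rw [TermOrder.initialTerm, MvPolynomial.coeff_monomial]
    by_cases hβ : τ.leadExp g = β
    · rw [if_pos hβ, ← hβ]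
      have hci := coeff_initialForm v g (τ.leadExp g)
      rw [hci] at hcl
      rw [hci]
      by_cases hcond : τ.leadExp g ∈ g.support ∧
          ∀ γ ∈ g.support, wdeg v γ ≤ wdeg v (τ.leadExp g)
      · rw [if_pos hcond]
      · rw [if_neg hcond] at hcl
        exact absurd rfl hcl
    · rw [if_neg hβ]
      by_contra hne
      exact hβ (hsub β (MvPolynomial.mem_support_iff.2 hne)).symm
  · -- backward direction
    intro hv
    apply le_antisymm
    · rw [initialFormIdeal, Ideal.span_le]
      rintro p ⟨f, hfI, rfl⟩
      have := TermOrder.initialForm_mem_span hGspan hGinit hmonic hv f hfI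
      rw [← hGinit] at this
      exact this
    · rw [hGinit, Ideal.span_le]
      rintro p ⟨g, hgG, rfl⟩
      rw [← hv g hgG]
      exact Ideal.subset_span ⟨g, hGspan ▸ Ideal.subset_span hgG, rfl⟩
end
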